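/- Let H be a graph obtained as an R-minor of a connected graph G (via an R-net N and R-partition 𝒫), with R ≥ c. If f : V(G)\Y → ℝ is a non-contracting embedding with expansion at most c, and C is a cycle in H all of whose vertices have clusters disjoint from Y, then a contradiction arises; specifically, there exist adjacent net points u, v on C and vertices u', v' on a path joining them inside 𝒫(u) ∪ 𝒫(v), and a net point w on C, with |f(u')−f(v')| ≥ d_G(u',w) + d_G(w,v') > R ≥ c, contradicting that f has expansion at most c since u', v' are adjacent in G. -/

import Mathlib

open SimpleGraph

lemma straddle_aux {α : Type*} {K : SimpleGraph α} (g : α → ℝ) (t : ℝ) :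
    ∀ {x y : α} (p : K.Walk x y), g x ≤ t → t ≤ g y → x ≠ y →
    ∃ u v, K.Adj u v ∧ u ∈ p.support ∧ v ∈ p.support ∧ g u ≤ t ∧ t ≤ g v := by
  intro x y p
  induction p with
  | nil => intro _ _ h; exact absurd rfl h
  | @cons x m y h p ih =>
    intro hx hy _
    by_cases hm : t ≤ g m
    · exact ⟨x, m, h, by simp, by simp [SimpleGraph.Walk.start_mem_support], hx, hm⟩
    · push_neg at hm
      have hmy : m ≠ y := by intro e; subst e; linarith
      obtain ⟨u, v, hadj, hu, hv, h1, h2⟩ := ih hm.le hy hmy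
      exact ⟨u, v, hadj, by simp [hu], by simp [hv], h1, h2⟩

lemma end_mem_tail_ne {α : Type*} {K : SimpleGraph α} {x y : α} (p : K.Walk x y) (h : x ≠ y) :
    y ∈ p.support.tail := by
  cases p with
  | nil => exact absurd rfl h
  | cons h' p => simpa using p.end_mem_support

lemma end_mem_tail_len {α : Type*} {K : SimpleGraph α} {x y : α} (p : K.Walk x y)
    (h : 0 < p.length) : y ∈ p.support.tail := by
  cases p with
  | nil => simp at h
  | cons h' p => simpa using p.end_mem_support

lemma walk_avoid {α : Type*} [DecidableEq α] [BEq α] [LawfulBEq α] {K : SimpleGraph α} {m w : α} (p : K.Walk m w)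
    {M : α} (hM : M ∈ p.support) (hMw : M ≠ w) (hcount : p.support.count w = 1) :
    ∃ P : K.Walk m M, w ∉ P.support ∧ ∀ x ∈ P.support, x ∈ p.support := by
  refine ⟨p.takeUntil M hM, ?_, fun x hx => p.support_takeUntil_subset hM hx⟩
  have hsup : p.support = (p.takeUntil M hM).support ++ (p.dropUntil M hM).support.tail := by
    rw [← SimpleGraph.Walk.support_append, p.take_spec hM]
  have hwdrop : w ∈ (p.dropUntil M hM).support.tail :=
    end_mem_tail_ne _ hMw
  intro hwP
  have h1 : 1 ≤ (p.takeUntil M hM).support.count w := List.count_pos_iff.mpr hwP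
  have h2 : 1 ≤ ((p.dropUntil M hM).support.tail).count w := List.count_pos_iff.mpr hwdrop
  rw [hsup, List.count_append] at hcount
  omega

lemma dist_le_induce_dist {V : Type*} (G : SimpleGraph V) (s : Set V) {x y : s}
    (h : (G.induce s).Reachable x y) : G.dist ↑x ↑y ≤ (G.induce s).dist x y := by
  obtain ⟨p, hp⟩ := h.exists_walk_length_eq_dist
  calc G.dist ↑x ↑y ≤ (p.map (SimpleGraph.Embedding.induce s).toHom).length :=
        SimpleGraph.dist_le _
    _ = p.length := by rw [SimpleGraph.Walk.length_map]
    _ = _ := hp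

/-- The `R`-minor of `G` induced by a Voronoi partition. -/
def voronoiMinor {V : Type*} (G : SimpleGraph V) (N : Set V) (center : V → V) :
    SimpleGraph N where
  Adj u v := u ≠ v ∧ ∃ a b : V, G.Adj a b ∧ center a = ↑u ∧ center b = ↑v
  symm := by
    constructor
    rintro u v ⟨h, a, b, hab, ha, hb⟩
    exact ⟨h.symm, b, a, hab.symm, hb, ha⟩
  loopless := by constructor; rintro u ⟨h, -⟩; exact h rfl

/-- Let `H` be an `R`-minor of a connected graph `G` (via an
`R`-net `N` and `R`-partition given by `center`), with `R ≥ c ≥ 1`. Suppose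
`f : V(G) \ Y → ℝ` is a non-contracting embedding with expansion at most `c`
(w.r.t. the shortest-path metric of `G \ Y`), and suppose `C` is a cycle in `H`
all of whose vertices have Voronoi clusters disjoint from `Y`. Then a
contradiction arises. -/
theorem minor_cycle_contradiction {V : Type*} [Fintype V]
    (G : SimpleGraph V) (hG : G.Connected) (c : ℝ) (hc : 1 ≤ c)
    (R : ℕ) (hcR : c ≤ R)
    (N : Set V) (center : V → V)
    (hsep : ∀ u ∈ N, ∀ v ∈ N, u ≠ v → R < G.dist u v)
    (hcov : ∀ v : V, ∃ y ∈ N, G.dist v y ≤ R)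
    (hcen : ∀ v : V, center v ∈ N)
    (hfix : ∀ y ∈ N, center y = y)
    (hnear : ∀ v : V, ∀ y ∈ N, G.dist v (center v) ≤ G.dist v y)
    (hrad : ∀ v : V, G.dist v (center v) ≤ R)
    (hconn : ∀ y ∈ N, (G.induce {v : V | center v = y}).Connected)
    (Y : Set V)
    (f : {v : V // v ∉ Y} → ℝ)
    (hnc : ∀ x y : {v : V // v ∉ Y},
      (G.induce {v : V | v ∉ Y}).Reachable x y →
        ((G.induce {v : V | v ∉ Y}).dist x y : ℝ) ≤ |f x - f y|)
    (hexp : ∀ x y : {v : V // v ∉ Y},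
      (G.induce {v : V | v ∉ Y}).Reachable x y →
        |f x - f y| ≤ c * (G.induce {v : V | v ∉ Y}).dist x y)
    (a : N) (C : (voronoiMinor G N center).Walk a a) (hC : C.IsCycle)
    (hdisj : ∀ w ∈ C.support, ∀ x : V, center x = (w : V) → x ∉ Y) :
    False := by
  classical
  
  set G' := G.induce {v : V | v ∉ Y} with hG'def
  -- basic membership facts
  have memY : ∀ w : N, w ∈ C.support → (↑w : V) ∉ Y := fun w hw =>
    hdisj w hw ↑w (hfix ↑w w.2)
  -- reachability within a cluster
  have clusterReach : ∀ (w : N), w ∈ C.support → ∀ (x : V), center x = ↑w →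
      ∀ (hx : x ∉ Y) (hw' : (↑w : V) ∉ Y), G'.Reachable ⟨x, hx⟩ ⟨↑w, hw'⟩ := by
    intro w hw x hx hx' hw'
    have hsub : {v : V | center v = ↑w} ≤ {v : V | v ∉ Y} := fun z hz => hdisj w hw z hz
    have hr : (G.induce {v : V | center v = ↑w}).Reachable ⟨x, hx⟩ ⟨↑w, hfix ↑w w.2⟩ :=
      (hconn ↑w w.2).preconnected _ _
    exact hr.map (G.induceHomOfLE hsub).toHom
  -- reachability across an edge of H
  have edgeReach : ∀ (u v : N), (voronoiMinor G N center).Adj u v → ∀ (hu : u ∈ C.support) (hv : v ∈ C.support),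
      G'.Reachable ⟨↑u, memY u hu⟩ ⟨↑v, memY v hv⟩ := by
    intro u v huv hu hv
    obtain ⟨hne, x, y, hxy, hx, hy⟩ := huv
    have hxY : x ∉ Y := hdisj u hu x hx
    have hyY : y ∉ Y := hdisj v hv y hy
    have e : G'.Adj ⟨x, hxY⟩ ⟨y, hyY⟩ := hxy
    exact ((clusterReach u hu x hx hxY _).symm.trans
      (e.reachable.trans (clusterReach v hv y hy hyY _)))
  -- reachability along a walk of H staying in C.support
  have walkReach : ∀ (x y : N) (p : (voronoiMinor G N center).Walk x y), (∀ z ∈ p.support, z ∈ C.support) →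
      ∀ (hx : (↑x : V) ∉ Y) (hy : (↑y : V) ∉ Y), G'.Reachable ⟨↑x, hx⟩ ⟨↑y, hy⟩ := by
    intro x y p
    induction p with
    | nil => intro _ hx hy; exact Reachable.refl _
    | @cons x m y h p ih =>
      intro hsub hx hy
      have hxC : x ∈ C.support := hsub x (by simp)
      have hmC : m ∈ C.support := hsub m (by simp [Walk.start_mem_support])
      exact (edgeReach x m h hxC hmC).trans
        (ih (fun z hz => hsub z (by simp [hz])) (memY m hmC) hy)
  have reachC : ∀ (x : N), x ∈ C.support → ∀ (y : N), y ∈ C.support →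
      ∀ (hx : (↑x : V) ∉ Y) (hy : (↑y : V) ∉ Y), G'.Reachable ⟨↑x, hx⟩ ⟨↑y, hy⟩ := by
    intro x hx y hy hx' hy'
    have ha : (↑a : V) ∉ Y := memY a C.start_mem_support
    have r1 : G'.Reachable ⟨↑a, ha⟩ ⟨↑x, hx'⟩ :=
      walkReach a x (C.takeUntil x hx)
        (fun z hz => C.support_takeUntil_subset hx hz) ha hx'
    have r2 : G'.Reachable ⟨↑a, ha⟩ ⟨↑y, hy'⟩ :=
      walkReach a y (C.takeUntil y hy)
        (fun z hz => C.support_takeUntil_subset hy hz) ha hy'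
    exact r1.symm.trans r2
  -- the value function on net points
  set g : N → ℝ := fun x => if h : (↑x : V) ∉ Y then f ⟨↑x, h⟩ else 0 with hgdef
  have hg : ∀ (x : N) (h : (↑x : V) ∉ Y), g x = f ⟨↑x, h⟩ := fun x h => dif_pos h
  -- distinct net points on the cycle have far-apart values
  have netdist : ∀ (x : N), x ∈ C.support → ∀ (y : N), y ∈ C.support → x ≠ y →
      (R : ℝ) < |g x - g y| := by
    intro x hx y hy hne
    have hx' := memY x hx
    have hy' := memY y hy
    have hreach := reachC x hx y hy hx' hy'
    have h1 := hnc _ _ hreach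
    have h2 : G.dist ↑x ↑y ≤ G'.dist ⟨↑x, hx'⟩ ⟨↑y, hy'⟩ :=
      dist_le_induce_dist G _ hreach
    have h3 : R < G.dist ↑x ↑y := hsep ↑x x.2 ↑y y.2 (fun e => hne (Subtype.ext e))
    rw [hg x hx', hg y hy']
    have h2' : (G.dist ↑x ↑y : ℝ) ≤ (G'.dist ⟨↑x, hx'⟩ ⟨↑y, hy'⟩ : ℝ) := by exact_mod_cast h2
    have h3' : (R : ℝ) < (G.dist ↑x ↑y : ℝ) := by exact_mod_cast h3
    linarith
  have gne : ∀ (x : N), x ∈ C.support → ∀ (y : N), y ∈ C.support → x ≠ y → g x ≠ g y := by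
    intro x hx y hy hne he
    have := netdist x hx y hy hne
    rw [he] at this
    simp at this
    have hR : (1 : ℝ) ≤ (R : ℝ) := le_trans hc hcR
    linarith
  -- the support as a finset has at least 3 elements
  set S : Finset N := C.support.toFinset with hSdef
  have hmemS : ∀ x : N, x ∈ S ↔ x ∈ C.support := fun x => List.mem_toFinset
  have hS3 : 3 ≤ S.card := by
    have hlen : 3 ≤ C.length := hC.three_le_length
    have hnodup : C.support.tail.Nodup := hC.support_nodup
    have hcard : C.support.tail.toFinset.card = C.support.tail.length :=
      List.toFinset_card_of_nodup hnodup
    have hlen2 : C.support.tail.length = C.length := by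
      have := C.length_support
      have h2 : C.support.length = C.support.tail.length + 1 := by
        rw [C.support_eq_cons]; simp
      omega
    have hsub : C.support.tail.toFinset ⊆ S := by
      intro z hz
      rw [List.mem_toFinset] at hz
      rw [hmemS]
      rw [C.support_eq_cons]
      exact List.mem_cons_of_mem _ hz
    calc 3 ≤ C.support.tail.toFinset.card := by omega
      _ ≤ S.card := Finset.card_le_card hsub
  have hSne : S.Nonempty := Finset.card_pos.mp (by omega)
  obtain ⟨M, hMS, hMmax⟩ := S.exists_max_image g hSne
  obtain ⟨m, hmS, hmmin⟩ := S.exists_min_image g hSne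
  -- a third vertex w
  have hwex : (S \ {m, M}).Nonempty := by
    rw [← Finset.card_pos]
    have h1 := Finset.le_card_sdiff ({m, M} : Finset N) S
    have h2 : ({m, M} : Finset N).card ≤ 2 := Finset.card_insert_le _ _ |>.trans (by simp)
    omega
  obtain ⟨w, hwmem⟩ := hwex
  rw [Finset.mem_sdiff, Finset.mem_insert, Finset.mem_singleton] at hwmem
  obtain ⟨hwS, hwne⟩ := hwmem
  push_neg at hwne
  obtain ⟨hwm, hwM⟩ := hwne
  have hmC : m ∈ C.support := (hmemS m).mp hmS
  have hMC : M ∈ C.support := (hmemS M).mp hMS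
  have hwC : w ∈ C.support := (hmemS w).mp hwS
  have hgmw : g m < g w :=
    lt_of_le_of_ne (hmmin w hwS) (fun e => gne m hmC w hwC (Ne.symm hwm) e)
  have hgwM : g w < g M :=
    lt_of_le_of_ne (hMmax w hwS) (gne w hwC M hMC hwM)
  have hmM : m ≠ M := fun e => by rw [e] at hgmw; linarith
  -- rotate the cycle at w
  set q := C.rotate w hwC with hqdef
  have hq : q.IsCycle := hC.rotate hwC
  have memtail : ∀ (x : N) (p : (voronoiMinor G N center).Walk x x), 0 < p.length →
      ∀ z : N, z ∈ p.support ↔ z ∈ p.support.tail := by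
    intro x p hlen z
    constructor
    · intro h
      rw [p.support_eq_cons] at h
      rcases List.mem_cons.mp h with h | h
      · rw [h]; exact end_mem_tail_len p hlen
      · exact h
    · exact List.mem_of_mem_tail
  have hClen : 3 ≤ C.length := hC.three_le_length
  have hqlen : 3 ≤ q.length := hq.three_le_length
  have hqsup : ∀ z : N, z ∈ q.support ↔ z ∈ C.support := by
    intro z
    rw [memtail w q (by omega) z, memtail a C (by omega) z]
    exact (C.support_rotate w hwC).mem_iff
  have hmq : m ∈ q.support := (hqsup m).mpr hmC
  have hMq : M ∈ q.support := (hqsup M).mpr hMC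
  have hmw : m ≠ w := Ne.symm hwm
  have hMw : M ≠ w := Ne.symm hwM
  -- count of w in q.support is 2
  have hqcount : q.support.count w = 2 := by
    have htail : q.support.tail.Nodup := hq.support_nodup
    have hwtail : w ∈ q.support.tail := end_mem_tail_len q (by
      have := hq.three_le_length; omega)
    have h1 : q.support.tail.count w = 1 := List.count_eq_one_of_mem htail hwtail
    rw [q.support_eq_cons]
    rw [List.count_cons_self]
    omega
  set p1 := q.takeUntil m hmq with hp1def
  set p2 := q.dropUntil m hmq with hp2def
  have hsplit : q.support = p1.support ++ p2.support.tail := by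
    rw [← SimpleGraph.Walk.support_append, q.take_spec hmq]
  have hwp1 : 1 ≤ p1.support.count w := List.count_pos_iff.mpr p1.start_mem_support
  have hwp2t : 1 ≤ p2.support.tail.count w :=
    List.count_pos_iff.mpr (end_mem_tail_ne p2 hmw)
  have hcounts : p1.support.count w = 1 ∧ p2.support.tail.count w = 1 := by
    have := hqcount
    rw [hsplit, List.count_append] at this
    omega
  have hp2count : p2.support.count w = 1 := by
    rw [p2.support_eq_cons, List.count_cons_of_ne hmw]
    exact hcounts.2
  -- a walk from m to M within the cycle avoiding w
  have hPex : ∃ P : (voronoiMinor G N center).Walk m M,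
      w ∉ P.support ∧ ∀ x ∈ P.support, x ∈ C.support := by
    by_cases hMp2 : M ∈ p2.support
    · obtain ⟨P, hPw, hPsub⟩ := walk_avoid p2 hMp2 hMw hp2count
      exact ⟨P, hPw, fun x hx => (hqsup x).mp
        (q.support_dropUntil_subset hmq (hPsub x hx))⟩
    · have hMp1 : M ∈ p1.support := by
        have := hMq
        rw [hsplit, List.mem_append] at this
        rcases this with h | h
        · exact h
        · exact absurd (List.mem_of_mem_tail h) hMp2
      have hp4count : p1.reverse.support.count w = 1 := by
        rw [SimpleGraph.Walk.support_reverse]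
        rw [(p1.support.reverse_perm).count_eq]
        exact hcounts.1
      have hMp4 : M ∈ p1.reverse.support := by
        rw [SimpleGraph.Walk.support_reverse, List.mem_reverse]; exact hMp1
      obtain ⟨P, hPw, hPsub⟩ := walk_avoid p1.reverse hMp4 hMw hp4count
      refine ⟨P, hPw, fun x hx => ?_⟩
      have := hPsub x hx
      rw [SimpleGraph.Walk.support_reverse, List.mem_reverse] at this
      exact (hqsup x).mp (q.support_takeUntil_subset hmq this)
  obtain ⟨P, hPw, hPsub⟩ := hPex
  -- first straddle: find an edge {u,v} of the cycle straddling g w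
  obtain ⟨u, v, huv, huP, hvP, hgu, hgv⟩ :=
    straddle_aux g (g w) P hgmw.le hgwM.le hmM
  have huC : u ∈ C.support := hPsub u huP
  have hvC : v ∈ C.support := hPsub v hvP
  have hune : u ≠ w := fun e => hPw (e ▸ huP)
  have hvne : v ≠ w := fun e => hPw (e ▸ hvP)
  -- unpack the edge of H
  obtain ⟨huvne, x, y, hxy, hx, hy⟩ := huv
  have hxY : x ∉ Y := hdisj u huC x hx
  have hyY : y ∉ Y := hdisj v hvC y hy
  have huY : (↑u : V) ∉ Y := memY u huC
  have hvY : (↑v : V) ∉ Y := memY v hvC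
  have hwY : (↑w : V) ∉ Y := memY w hwC
  -- walks within the clusters of u and v
  have hsubU : {z : V | center z = ↑u} ≤ {z : V | z ∉ Y} := fun z hz => hdisj u huC z hz
  have hsubV : {z : V | center z = ↑v} ≤ {z : V | z ∉ Y} := fun z hz => hdisj v hvC z hz
  obtain ⟨pu⟩ := (hconn ↑u u.2).preconnected ⟨↑u, hfix ↑u u.2⟩ ⟨x, hx⟩
  obtain ⟨pv⟩ := (hconn ↑v v.2).preconnected ⟨y, hy⟩ ⟨↑v, hfix ↑v v.2⟩
  have eadj : G'.Adj ⟨x, hxY⟩ ⟨y, hyY⟩ := hxy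
  set Wu : G'.Walk ⟨↑u, huY⟩ ⟨x, hxY⟩ := pu.map (G.induceHomOfLE hsubU).toHom with hWudef
  set Wv : G'.Walk ⟨y, hyY⟩ ⟨↑v, hvY⟩ := pv.map (G.induceHomOfLE hsubV).toHom with hWvdef
  set W2 : G'.Walk ⟨↑u, huY⟩ ⟨↑v, hvY⟩ := Wu.append (SimpleGraph.Walk.cons eadj Wv)
    with hW2def
  -- every vertex of W2 lies in the cluster of u or of v
  have hW2cen : ∀ z ∈ W2.support, center ↑z = ↑u ∨ center ↑z = ↑v := by
    intro z hz
    rw [hW2def, SimpleGraph.Walk.mem_support_append_iff] at hz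
    rcases hz with hz | hz
    · left
      rw [hWudef] at hz
      replace hz : z ∈ (pu.map (G.induceHomOfLE hsubU).toHom).support := hz
      rw [SimpleGraph.Walk.support_map] at hz
      obtain ⟨z0, hz0, hz0e⟩ := List.mem_map.mp hz
      have : (↑z : V) = ↑z0 := by rw [← hz0e]; rfl
      rw [this]; exact z0.2
    · rw [SimpleGraph.Walk.support_cons] at hz
      rcases List.mem_cons.mp hz with hz | hz
      · left; rw [hz]; exact hx
      · right
        rw [hWvdef] at hz
        replace hz : z ∈ (pv.map (G.induceHomOfLE hsubV).toHom).support := hz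
        rw [SimpleGraph.Walk.support_map] at hz
        obtain ⟨z0, hz0, hz0e⟩ := List.mem_map.mp hz
        have : (↑z : V) = ↑z0 := by rw [← hz0e]; rfl
        rw [this]; exact z0.2
  have hW2ne : (⟨↑u, huY⟩ : {v : V // v ∉ Y}) ≠ ⟨↑v, hvY⟩ := by
    intro e
    have h : (↑u : V) = ↑v := congrArg (Subtype.val : {z : V // z ∉ Y} → V) e
    exact huvne (Subtype.ext h)
  -- second straddle: find the edge {u', v'} of G' straddling g w
  obtain ⟨u', v', hadj', hu'W, hv'W, hfu', hfv'⟩ :=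
    straddle_aux f (g w) W2 (by rw [← hg u huY]; exact hgu) (by rw [← hg v hvY]; exact hgv)
      hW2ne
  -- reachability of u', v' to w
  have hreachW2 : ∀ z ∈ W2.support, G'.Reachable ⟨↑u, huY⟩ z := fun z hz =>
    ⟨W2.takeUntil z hz⟩
  have hru' : G'.Reachable u' ⟨↑w, hwY⟩ :=
    (hreachW2 u' hu'W).symm.trans (reachC u huC w hwC huY hwY)
  have hrv' : G'.Reachable v' ⟨↑w, hwY⟩ :=
    (hreachW2 v' hv'W).symm.trans (reachC u huC w hwC huY hwY)
  -- lower bound on G-distance from a W2 vertex to w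
  have distLB : ∀ z : {v : V // v ∉ Y}, z ∈ W2.support → R + 1 ≤ 2 * G.dist ↑z ↑w := by
    intro z hz
    rcases hW2cen z hz with hcz | hcz
    · have hyne : (↑u : V) ≠ ↑w := fun e => hune (Subtype.ext e)
      have h1 : R < G.dist ↑u ↑w := hsep ↑u u.2 ↑w w.2 hyne
      have h2 : G.dist ↑u ↑w ≤ G.dist ↑u ↑z + G.dist ↑z ↑w := hG.dist_triangle
      have h3 : G.dist ↑z ↑u ≤ G.dist ↑z ↑w := by
        have := hnear ↑z ↑w w.2
        rwa [hcz] at this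
      have h4 : G.dist ↑u ↑z = G.dist ↑z ↑u := SimpleGraph.dist_comm ..
      omega
    · have hyne : (↑v : V) ≠ ↑w := fun e => hvne (Subtype.ext e)
      have h1 : R < G.dist ↑v ↑w := hsep ↑v v.2 ↑w w.2 hyne
      have h2 : G.dist ↑v ↑w ≤ G.dist ↑v ↑z + G.dist ↑z ↑w := hG.dist_triangle
      have h3 : G.dist ↑z ↑v ≤ G.dist ↑z ↑w := by
        have := hnear ↑z ↑w w.2
        rwa [hcz] at this
      have h4 : G.dist ↑v ↑z = G.dist ↑z ↑v := SimpleGraph.dist_comm ..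
      omega
  -- upper bounds from non-contraction
  have hgw : g w = f ⟨↑w, hwY⟩ := hg w hwY
  have hBu : (G.dist ↑u' ↑w : ℝ) ≤ g w - f u' := by
    have h1 := hnc u' ⟨↑w, hwY⟩ hru'
    have h2 : G.dist ↑u' ↑w ≤ G'.dist u' ⟨↑w, hwY⟩ := dist_le_induce_dist G _ hru'
    have h3 : |f u' - f ⟨↑w, hwY⟩| = g w - f u' := by
      rw [hgw] at hfu' ⊢
      rw [abs_sub_comm]
      exact abs_of_nonneg (by linarith)
    rw [h3] at h1
    have h2' : (G.dist ↑u' ↑w : ℝ) ≤ (G'.dist u' ⟨↑w, hwY⟩ : ℝ) := by exact_mod_cast h2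
    linarith
  have hBv : (G.dist ↑v' ↑w : ℝ) ≤ f v' - g w := by
    have h1 := hnc v' ⟨↑w, hwY⟩ hrv'
    have h2 : G.dist ↑v' ↑w ≤ G'.dist v' ⟨↑w, hwY⟩ := dist_le_induce_dist G _ hrv'
    have h3 : |f v' - f ⟨↑w, hwY⟩| = f v' - g w := by
      rw [hgw] at hfv' ⊢
      exact abs_of_nonneg (by linarith)
    rw [h3] at h1
    have h2' : (G.dist ↑v' ↑w : ℝ) ≤ (G'.dist v' ⟨↑w, hwY⟩ : ℝ) := by exact_mod_cast h2
    linarith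
  -- the two distances sum to more than R
  have hsum : R + 1 ≤ G.dist ↑u' ↑w + G.dist ↑v' ↑w := by
    have h1 := distLB u' hu'W
    have h2 := distLB v' hv'W
    omega
  have hsum' : (R : ℝ) + 1 ≤ (G.dist ↑u' ↑w : ℝ) + (G.dist ↑v' ↑w : ℝ) := by
    exact_mod_cast hsum
  -- but u' v' is an edge of G', so |f u' - f v'| ≤ c
  have hdist1 : G'.dist u' v' = 1 := SimpleGraph.dist_eq_one_iff_adj.mpr hadj'
  have hexp' := hexp u' v' hadj'.reachable
  rw [hdist1] at hexp'
  have habs : |f u' - f v'| = f v' - f u' := by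
    rw [abs_sub_comm]
    exact abs_of_nonneg (by linarith)
  rw [habs] at hexp'
  simp at hexp'
  linarith
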